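/- Consider an L-graph with a (p,n,d)-non-backtracking multi-labelling: each n-vertex has a label in [n], each p-vertex a tuple of d distinct labels in [p] (d ≤ ℓ), adjacent n-vertices have distinct labels, adjacent p-vertices have tuples that are not equal as sets, and for each (n-label, p-label) pair the number of incident sub-edges is even. Let r̃ be the number of distinct n-labels and c̃ the number of distinct p-labels. Then r̃ + c̃/ℓ ≤ L/2 + dL/(2ℓ). -/

import Mathlib

/-- The number of edges of the `L`-cycle whose `n`-endpoint is labelled `i` and whose
`p`-endpoint's tuple contains `j`. -/
def incCount (L n p : ℕ) [NeZero L] (nlabel : Fin L → Fin n)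
    (ptuple : Fin L → Finset (Fin p)) (i : Fin n) (j : Fin p) : ℕ :=
  (Finset.univ.filter fun s : Fin L => j ∈ ptuple s ∧ nlabel s = i).card +
  (Finset.univ.filter fun s : Fin L => j ∈ ptuple s ∧ nlabel (s + 1) = i).card

/-- For a `(p,n,d)`-non-backtracking multi-labelling of an `L`-graph with `r̃` distinct
`n`-labels and `c̃` distinct `p`-labels, `r̃ + c̃/ℓ ≤ L/2 + dL/(2ℓ)`. -/
theorem nonbacktracking_label_bound (L n p ℓ d : ℕ) [NeZero L]
    (hd : 1 ≤ d) (hdℓ : d ≤ ℓ)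
    (nlabel : Fin L → Fin n) (ptuple : Fin L → Finset (Fin p))
    (hsize : ∀ s : Fin L, (ptuple s).card = d)
    (hadjn : ∀ s : Fin L, nlabel s ≠ nlabel (s + 1))
    (hadjp : ∀ s : Fin L, ptuple s ≠ ptuple (s + 1))
    (heven : ∀ (i : Fin n) (j : Fin p), Even (incCount L n p nlabel ptuple i j)) :
    ((Finset.univ.image nlabel).card : ℝ) + ((Finset.univ.biUnion ptuple).card : ℝ) / ℓ ≤
      (L : ℝ) / 2 + (d : ℝ) * L / (2 * ℓ) := by
  classical
  -- every n-label appears at least twice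
  have hnfiber : ∀ i ∈ Finset.univ.image nlabel,
      2 ≤ (Finset.univ.filter fun s : Fin L => nlabel s = i).card := by
    intro i hi
    obtain ⟨s₀, -, hs₀⟩ := Finset.mem_image.mp hi
    by_contra hlt
    push_neg at hlt
    have hmem : s₀ ∈ Finset.univ.filter fun s : Fin L => nlabel s = i := by
      simp [hs₀]
    have hone : (Finset.univ.filter fun s : Fin L => nlabel s = i).card = 1 := by
      have := Finset.card_pos.mpr ⟨s₀, hmem⟩
      omega
    obtain ⟨a, ha⟩ := Finset.card_eq_one.mp hone
    have has₀ : s₀ = a := by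
      have := hmem; rw [ha] at this; exact Finset.mem_singleton.mp this
    rw [has₀] at hs₀
    clear hmem has₀
    set s₀ := a with hs₀a
    have hunique : ∀ s : Fin L, nlabel s = i ↔ s = s₀ := by
      intro s
      constructor
      · intro h
        have : s ∈ Finset.univ.filter fun s : Fin L => nlabel s = i := by simp [h]
        rw [ha] at this; simpa using this
      · rintro rfl; exact hs₀
    -- pick j distinguishing ptuple (s₀ - 1) and ptuple s₀
    have hne : ptuple (s₀ - 1) ≠ ptuple s₀ := by
      have := hadjp (s₀ - 1)
      rwa [sub_add_cancel] at this
    have : ∃ j : Fin p, ¬ (j ∈ ptuple (s₀ - 1) ↔ j ∈ ptuple s₀) := by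
      by_contra h
      push_neg at h
      exact hne (Finset.ext fun j => (h j))
    obtain ⟨j, hj⟩ := this
    have hodd : incCount L n p nlabel ptuple i j =
        (if j ∈ ptuple s₀ then 1 else 0) + (if j ∈ ptuple (s₀ - 1) then 1 else 0) := by
      unfold incCount
      rw [Finset.card_filter, Finset.card_filter]
      congr 1
      · rw [Finset.sum_eq_single_of_mem s₀ (Finset.mem_univ _)]
        · simp [hs₀]
        · intro s _ hss
          have : nlabel s ≠ i := fun h => hss ((hunique s).mp h)
          simp [this]
      · rw [Finset.sum_eq_single_of_mem (s₀ - 1) (Finset.mem_univ _)]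
        · simp [sub_add_cancel, hs₀]
        · intro s _ hss
          have : nlabel (s + 1) ≠ i := by
            intro h
            have := (hunique (s + 1)).mp h
            apply hss
            rw [← this, add_sub_cancel_right]
          simp [this]
    have := heven i j
    rw [hodd] at this
    by_cases h1 : j ∈ ptuple s₀ <;> by_cases h2 : j ∈ ptuple (s₀ - 1) <;>
      simp [h1, h2] at hj this
  -- every p-label appears in at least two tuples
  have hpfiber : ∀ j ∈ Finset.univ.biUnion ptuple,
      2 ≤ (Finset.univ.filter fun s : Fin L => j ∈ ptuple s).card := by
    intro j hj
    obtain ⟨s₀, -, hs₀⟩ := Finset.mem_biUnion.mp hj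
    by_contra hlt
    push_neg at hlt
    have hmem : s₀ ∈ Finset.univ.filter fun s : Fin L => j ∈ ptuple s := by
      simp [hs₀]
    have hone : (Finset.univ.filter fun s : Fin L => j ∈ ptuple s).card = 1 := by
      have := Finset.card_pos.mpr ⟨s₀, hmem⟩
      omega
    obtain ⟨a, ha⟩ := Finset.card_eq_one.mp hone
    have has₀ : s₀ = a := by
      have := hmem; rw [ha] at this; exact Finset.mem_singleton.mp this
    rw [has₀] at hs₀
    clear hmem has₀
    set s₀ := a with hs₀a
    have hunique : ∀ s : Fin L, j ∈ ptuple s ↔ s = s₀ := by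
      intro s
      constructor
      · intro h
        have : s ∈ Finset.univ.filter fun s : Fin L => j ∈ ptuple s := by simp [h]
        rw [ha] at this; simpa using this
      · rintro rfl; exact hs₀
    set i := nlabel s₀ with hi
    have hodd : incCount L n p nlabel ptuple i j = 1 := by
      unfold incCount
      rw [Finset.card_filter, Finset.card_filter]
      have e1 : (∑ s : Fin L, if j ∈ ptuple s ∧ nlabel s = i then 1 else 0) = 1 := by
        rw [Finset.sum_eq_single_of_mem s₀ (Finset.mem_univ _)]
        · simp [hs₀, hi]
        · intro s _ hss
          have : j ∉ ptuple s := fun h => hss ((hunique s).mp h)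
          simp [this]
      have e2 : (∑ s : Fin L, if j ∈ ptuple s ∧ nlabel (s + 1) = i then 1 else 0) = 0 := by
        apply Finset.sum_eq_zero
        intro s _
        by_cases h : j ∈ ptuple s
        · have : s = s₀ := (hunique s).mp h
          subst this
          simp [h, (hadjn s₀).symm, hi]
          exact (hadjn s₀).symm
        · simp [h]
      omega
    have := heven i j
    rw [hodd] at this
    simp at this
  -- counting for n-labels: 2 * r̃ ≤ L
  have hr : 2 * (Finset.univ.image nlabel).card ≤ L := by
    have hcard : (Finset.univ : Finset (Fin L)).card =
        ∑ i ∈ Finset.univ.image nlabel,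
          (Finset.univ.filter fun s : Fin L => nlabel s = i).card :=
      Finset.card_eq_sum_card_fiberwise (fun s _ => Finset.mem_image_of_mem _ (Finset.mem_univ s))
    have : ∑ i ∈ Finset.univ.image nlabel, 2 ≤
        ∑ i ∈ Finset.univ.image nlabel,
          (Finset.univ.filter fun s : Fin L => nlabel s = i).card :=
      Finset.sum_le_sum hnfiber
    simp only [Finset.sum_const, smul_eq_mul] at this
    calc 2 * (Finset.univ.image nlabel).card
        = (Finset.univ.image nlabel).card * 2 := by ring
      _ ≤ (Finset.univ : Finset (Fin L)).card := by rw [hcard]; exact this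
      _ = L := by simp
  -- counting for p-labels: 2 * c̃ ≤ d * L
  have hc : 2 * (Finset.univ.biUnion ptuple).card ≤ d * L := by
    have hdc : ∑ j : Fin p, (Finset.univ.filter fun s : Fin L => j ∈ ptuple s).card
        = ∑ s : Fin L, (ptuple s).card := by
      simp only [Finset.card_filter]
      rw [Finset.sum_comm]
      congr 1
      ext s
      simp [Finset.sum_ite_mem]
    have h1 : ∑ j ∈ Finset.univ.biUnion ptuple, 2 ≤
        ∑ j ∈ Finset.univ.biUnion ptuple,
          (Finset.univ.filter fun s : Fin L => j ∈ ptuple s).card :=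
      Finset.sum_le_sum hpfiber
    have h2 : ∑ j ∈ Finset.univ.biUnion ptuple,
          (Finset.univ.filter fun s : Fin L => j ∈ ptuple s).card ≤
        ∑ j : Fin p, (Finset.univ.filter fun s : Fin L => j ∈ ptuple s).card :=
      Finset.sum_le_sum_of_subset (Finset.subset_univ _)
    have h3 : ∑ s : Fin L, (ptuple s).card = d * L := by
      simp [hsize, mul_comm]
    simp only [Finset.sum_const, smul_eq_mul] at h1
    omega
  -- combine
  have hℓ : (0:ℝ) < ℓ := by
    have : 1 ≤ ℓ := le_trans hd hdℓ
    exact_mod_cast Nat.lt_of_lt_of_le Nat.zero_lt_one this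
  have hrR : ((Finset.univ.image nlabel).card : ℝ) ≤ (L : ℝ) / 2 := by
    have : (2 * (Finset.univ.image nlabel).card : ℝ) ≤ (L : ℝ) := by exact_mod_cast hr
    linarith
  have hcR : ((Finset.univ.biUnion ptuple).card : ℝ) ≤ (d : ℝ) * L / 2 := by
    have : (2 * (Finset.univ.biUnion ptuple).card : ℝ) ≤ ((d : ℝ) * L) := by
      exact_mod_cast hc
    linarith
  have hdiv : ((Finset.univ.biUnion ptuple).card : ℝ) / ℓ ≤ (d : ℝ) * L / (2 * ℓ) := by
    rw [div_le_div_iff₀ hℓ (by positivity)]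
    calc ((Finset.univ.biUnion ptuple).card : ℝ) * (2 * ℓ)
        = (2 * ((Finset.univ.biUnion ptuple).card : ℝ)) * ℓ := by ring
      _ ≤ ((d : ℝ) * L) * ℓ := by
          apply mul_le_mul_of_nonneg_right _ hℓ.le
          linarith
  linarith
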